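/- Let ψ : ℝ⁴ × ℝ⁴ → ℝ be C¹ and define ψ_*(u,ω) = ψ(U(u), S(u,ω)) with U = (√(1+|u|²), u), S = (σω·u, σ(ω + (ω·u)u/(1+u⁰))). Let A, B : ℝ⁸ → ℝ⁴ satisfy η(A,U) = 0, η(A,S) + η(B,U) = 0, η(B,S) = 0 on the constraint surface. Then Aᵘ(∂_{uᵘ}ψ)_* + Bᵛ(∂_{sᵛ}ψ)_* = Aⁱ∂_{uⁱ}ψ_* + (1/σ)(√𝔥)ᵢʲ(Bⁱ − (s⁰/(1+u⁰))Aⁱ) ∂̸_{ωʲ}ψ_* − ((√𝔥)ᵢₖAⁱωᵏ/(u⁰(1+u⁰))) uʲ ∂̸_{ωʲ}ψ_*. -/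

import Mathlib

open Real Finset

private lemma hasDeriv_lin (a b : ℝ) : HasDerivAt (fun t : ℝ => a + t * b) b 0 :=
  (hasDerivAt_mul_const b).const_add a

private lemma hasDeriv_sq_sum (u v : Fin 3 → ℝ) :
    HasDerivAt (fun t : ℝ => 1 + ∑ k, (u k + t * v k) ^ 2) (2 * ∑ k, u k * v k) 0 := by
  have h : ∀ k ∈ Finset.univ, HasDerivAt (fun t : ℝ => (u k + t * v k) ^ 2)
      (2 * (u k * v k)) (0:ℝ) := by
    intro k _
    have := (hasDeriv_lin (u k) (v k)).pow 2
    norm_num at this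
    refine HasDerivAt.congr_deriv this ?_
    ring
  have := (HasDerivAt.fun_sum h).const_add (1:ℝ)
  refine HasDerivAt.congr_deriv this ?_
  rw [Finset.mul_sum]

private lemma hasDeriv_sqrt_sum (u v : Fin 3 → ℝ) :
    HasDerivAt (fun t : ℝ => Real.sqrt (1 + ∑ k, (u k + t * v k) ^ 2))
      ((∑ k, u k * v k) / Real.sqrt (1 + ∑ k, u k ^ 2)) 0 := by
  have hpos : (0:ℝ) < 1 + ∑ k, u k ^ 2 := by positivity
  have h0 : (1:ℝ) + ∑ k, (u k + 0 * v k) ^ 2 = 1 + ∑ k, u k ^ 2 := by norm_num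
  have h := (hasDeriv_sq_sum u v).sqrt (by simp only [h0]; exact hpos.ne')
  simp only [h0] at h
  convert h using 1
  have : Real.sqrt (1 + ∑ k, u k ^ 2) ≠ 0 := (Real.sqrt_pos.mpr hpos).ne'
  field_simp

private lemma hasDeriv_dot (w u v : Fin 3 → ℝ) :
    HasDerivAt (fun t : ℝ => ∑ k, w k * (u k + t * v k)) (∑ k, w k * v k) 0 :=
  HasDerivAt.fun_sum fun k _ => (hasDeriv_lin (u k) (v k)).const_mul (w k)

private lemma hasDeriv_dot' (u w v : Fin 3 → ℝ) :
    HasDerivAt (fun t : ℝ => ∑ k, (w k + t * v k) * u k) (∑ k, v k * u k) 0 :=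
  HasDerivAt.fun_sum fun k _ => (hasDeriv_lin (w k) (v k)).mul_const (u k)

private lemma hasDeriv_Yi (σ : ℝ) (u ω v : Fin 3 → ℝ) (i : Fin 3) :
    HasDerivAt (fun t : ℝ => σ * (ω i +
        ((∑ j, ω j * (u j + t * v j)) / (1 + Real.sqrt (1 + ∑ k, (u k + t * v k) ^ 2)))
          * (u i + t * v i)))
      (σ * ((∑ k, ω k * v k) * u i / (1 + Real.sqrt (1 + ∑ k, u k ^ 2))
        + (∑ k, ω k * u k) * v i / (1 + Real.sqrt (1 + ∑ k, u k ^ 2))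
        - (∑ k, ω k * u k) * ((∑ k, u k * v k) / Real.sqrt (1 + ∑ k, u k ^ 2)) * u i
            / (1 + Real.sqrt (1 + ∑ k, u k ^ 2)) ^ 2)) 0 := by
  have hpos : (0:ℝ) < 1 + ∑ k, u k ^ 2 := by positivity
  have hrpos : (0:ℝ) < Real.sqrt (1 + ∑ k, u k ^ 2) := Real.sqrt_pos.mpr hpos
  have hden : (1:ℝ) + Real.sqrt (1 + ∑ k, u k ^ 2) ≠ 0 := by positivity
  have hDen := (hasDeriv_sqrt_sum u v).const_add (1:ℝ)
  have hquot := (hasDeriv_dot ω u v).div hDen (by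
    simp only [zero_mul, add_zero]
    exact hden)
  have h := ((hquot.mul (hasDeriv_lin (u i) (v i))).const_add (ω i)).const_mul σ
  simp only [zero_mul, add_zero, Pi.div_apply, Pi.mul_apply] at h
  refine HasDerivAt.congr_deriv h ?_
  field_simp
  ring

private lemma curveU (σ : ℝ) (u ω v : Fin 3 → ℝ) :
    HasDerivAt (fun t : ℝ =>
        ((Fin.cons (Real.sqrt (1 + ∑ k, (u + t • v) k ^ 2)) (u + t • v),
          Fin.cons (σ * ∑ k, ω k * (u + t • v) k) fun i =>
            σ * (ω i + ((∑ j, ω j * (u + t • v) j)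
                / (1 + Real.sqrt (1 + ∑ k, (u + t • v) k ^ 2))) * (u + t • v) i)) :
          (Fin 4 → ℝ) × (Fin 4 → ℝ)))
      (Fin.cons ((∑ k, u k * v k) / Real.sqrt (1 + ∑ k, u k ^ 2)) v,
       Fin.cons (σ * ∑ k, ω k * v k) fun i =>
         σ * ((∑ k, ω k * v k) * u i / (1 + Real.sqrt (1 + ∑ k, u k ^ 2))
           + (∑ k, ω k * u k) * v i / (1 + Real.sqrt (1 + ∑ k, u k ^ 2))
           - (∑ k, ω k * u k) * ((∑ k, u k * v k) / Real.sqrt (1 + ∑ k, u k ^ 2)) * u i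
               / (1 + Real.sqrt (1 + ∑ k, u k ^ 2)) ^ 2)) 0 := by
  refine HasDerivAt.prodMk ?_ ?_ <;> rw [hasDerivAt_pi] <;> intro j <;>
    refine Fin.cases ?_ (fun i => ?_) j <;>
    simp only [Fin.cons_zero, Fin.cons_succ, Pi.add_apply, Pi.smul_apply, smul_eq_mul]
  · exact hasDeriv_sqrt_sum u v
  · exact hasDeriv_lin (u i) (v i)
  · exact (hasDeriv_dot ω u v).const_mul σ
  · exact hasDeriv_Yi σ u ω v i

private lemma curveW (σ : ℝ) (u ω w : Fin 3 → ℝ) :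
    HasDerivAt (fun t : ℝ =>
        ((Fin.cons (Real.sqrt (1 + ∑ k, u k ^ 2)) u,
          Fin.cons (σ * ∑ k, (ω + t • w) k * u k) fun i =>
            σ * ((ω + t • w) i + ((∑ j, (ω + t • w) j * u j)
                / (1 + Real.sqrt (1 + ∑ k, u k ^ 2))) * u i)) : (Fin 4 → ℝ) × (Fin 4 → ℝ)))
      ((0 : Fin 4 → ℝ),
       Fin.cons (σ * ∑ k, w k * u k) fun i =>
         σ * (w i + ((∑ k, w k * u k) / (1 + Real.sqrt (1 + ∑ k, u k ^ 2))) * u i)) 0 := by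
  refine HasDerivAt.prodMk (hasDerivAt_const _ _) ?_
  rw [hasDerivAt_pi]; intro j
  refine Fin.cases ?_ (fun i => ?_) j <;>
    simp only [Fin.cons_zero, Fin.cons_succ, Pi.add_apply, Pi.smul_apply, smul_eq_mul]
  · exact (hasDeriv_dot' u ω w).const_mul σ
  · exact (((hasDeriv_lin (ω i) (w i)).add
      (((hasDeriv_dot' u ω w).div_const _).mul_const (u i))).const_mul σ)

open Real Finset

private lemma fderiv_dir {E : Type*} [NormedAddCommGroup E] [NormedSpace ℝ E]
    (g : E → ℝ) (x v : E) (d : ℝ) (hg : DifferentiableAt ℝ g x)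
    (h : HasDerivAt (fun t : ℝ => g (x + t • v)) d 0) :
    fderiv ℝ g x v = d := by
  have hc : HasDerivAt (fun t : ℝ => x + t • v) v 0 := by
    have := ((hasDerivAt_id (0:ℝ)).smul_const v).const_add x
    simpa using this
  have h2 := hg.hasFDerivAt.comp_hasDerivAt_of_eq (0:ℝ) hc (by simp)
  exact h2.unique h

private lemma clm_expand (D : ((Fin 4 → ℝ) × (Fin 4 → ℝ)) →L[ℝ] ℝ) (v w : Fin 4 → ℝ) :
    D (v, w) = (∑ μ, v μ * D (Pi.single μ 1, 0)) + (∑ ν, w ν * D (0, Pi.single ν 1)) := by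
  have hx : ∀ x : Fin 4 → ℝ, x = ∑ μ, x μ • (Pi.single μ (1:ℝ) : Fin 4 → ℝ) := by
    intro x
    funext j
    simp [Finset.sum_apply, Pi.single_apply]
  have h1 : ((v, w) : (Fin 4 → ℝ) × (Fin 4 → ℝ))
      = (∑ μ, v μ • ((Pi.single μ 1, 0) : (Fin 4 → ℝ) × (Fin 4 → ℝ)))
        + (∑ ν, w ν • (((0 : Fin 4 → ℝ), Pi.single ν 1) : (Fin 4 → ℝ) × (Fin 4 → ℝ))) := by
    refine Prod.ext ?_ ?_ <;>
      simp only [Prod.fst_sum, Prod.snd_sum, Prod.smul_mk, Prod.fst_add, Prod.snd_add,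
        smul_zero, Finset.sum_const_zero, add_zero, zero_add, Prod.mk_add_mk]
    · exact hx v
    · exact hx w
  rw [h1, map_add, map_sum, map_sum]
  simp only [map_smul, smul_eq_mul]

private lemma diff_inner_u (σ : ℝ) (ω : Fin 3 → ℝ) (u : Fin 3 → ℝ) :
    DifferentiableAt ℝ (fun w : Fin 3 → ℝ =>
      ((Fin.cons (Real.sqrt (1 + ∑ k, w k ^ 2)) w,
        Fin.cons (σ * ∑ k, ω k * w k) fun i =>
          σ * (ω i + ((∑ j, ω j * w j)
              / (1 + Real.sqrt (1 + ∑ k, w k ^ 2))) * w i)) :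
        (Fin 4 → ℝ) × (Fin 4 → ℝ))) u := by
  have hpos : (0:ℝ) < 1 + ∑ k, u k ^ 2 := by positivity
  have hproj : ∀ k : Fin 3, DifferentiableAt ℝ (fun w : Fin 3 → ℝ => w k) u := fun k =>
    differentiableAt_apply k u
  have hsum : DifferentiableAt ℝ (fun w : Fin 3 → ℝ => 1 + ∑ k, w k ^ 2) u :=
    (DifferentiableAt.fun_sum fun k _ => (hproj k).pow 2).const_add 1
  have hsqrt : DifferentiableAt ℝ (fun w : Fin 3 → ℝ => Real.sqrt (1 + ∑ k, w k ^ 2)) u :=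
    hsum.sqrt hpos.ne'
  have hrpos : (0:ℝ) < Real.sqrt (1 + ∑ k, u k ^ 2) := Real.sqrt_pos.mpr hpos
  have hdot : DifferentiableAt ℝ (fun w : Fin 3 → ℝ => ∑ j, ω j * w j) u :=
    DifferentiableAt.fun_sum fun j _ => (hproj j).const_mul (ω j)
  have hden : DifferentiableAt ℝ (fun w : Fin 3 → ℝ =>
      1 + Real.sqrt (1 + ∑ k, w k ^ 2)) u := hsqrt.const_add 1
  have hdenne : (1:ℝ) + Real.sqrt (1 + ∑ k, u k ^ 2) ≠ 0 := by positivity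
  refine DifferentiableAt.prodMk ?_ ?_ <;> rw [differentiableAt_pi] <;> intro j <;>
    refine Fin.cases ?_ (fun i => ?_) j <;>
    simp only [Fin.cons_zero, Fin.cons_succ]
  · exact hsqrt
  · exact hproj i
  · exact hdot.const_mul σ
  · have hquot : DifferentiableAt ℝ (fun w : Fin 3 → ℝ =>
        (∑ j, ω j * w j) / (1 + Real.sqrt (1 + ∑ k, w k ^ 2))) u := by exact hdot.mul (hden.inv hdenne)
    exact ((hquot.mul (hproj i)).const_add (ω i)).const_mul σ

private lemma diff_inner_w (σ : ℝ) (u : Fin 3 → ℝ) (ω : Fin 3 → ℝ) :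
    DifferentiableAt ℝ (fun o : Fin 3 → ℝ =>
      ((Fin.cons (Real.sqrt (1 + ∑ k, u k ^ 2)) u,
        Fin.cons (σ * ∑ k, o k * u k) fun i =>
          σ * (o i + ((∑ j, o j * u j)
              / (1 + Real.sqrt (1 + ∑ k, u k ^ 2))) * u i)) :
        (Fin 4 → ℝ) × (Fin 4 → ℝ))) ω := by
  have hproj : ∀ k : Fin 3, DifferentiableAt ℝ (fun o : Fin 3 → ℝ => o k) ω := fun k =>
    differentiableAt_apply k ω
  have hdot : DifferentiableAt ℝ (fun o : Fin 3 → ℝ => ∑ j, o j * u j) ω :=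
    DifferentiableAt.fun_sum fun j _ => (hproj j).mul_const (u j)
  refine DifferentiableAt.prodMk (differentiableAt_const _) ?_
  rw [differentiableAt_pi]; intro j
  refine Fin.cases ?_ (fun i => ?_) j <;> simp only [Fin.cons_zero, Fin.cons_succ]
  · exact hdot.const_mul σ
  · have hquot : DifferentiableAt ℝ (fun o : Fin 3 → ℝ =>
        (∑ j, o j * u j) / (1 + Real.sqrt (1 + ∑ k, u k ^ 2))) ω :=
      by exact hdot.mul_const (1 + Real.sqrt (1 + ∑ k, u k ^ 2))⁻¹
    exact (((hproj i).add (hquot.mul_const (u i))).const_mul σ)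

private lemma key (σ r c uu P0 Q0 a0 b0 ap aq au aw bq bu bw qu qw : ℝ)
    (hσ : σ ≠ 0) (hr : 0 < r) (huu : uu = r ^ 2 - 1)
    (h1 : -(a0 * r) + au = 0)
    (h2 : (-(a0 * (σ * c)) + (σ * aw + σ * c * au / (1 + r))) + (-(b0 * r) + bu) = 0)
    (h3 : -(b0 * (σ * c)) + (σ * bw + σ * c * bu / (1 + r)) = 0) :
    a0 * P0 + ap + b0 * Q0 + bq =
      (ap + au / r * P0 + σ * aw * Q0 + σ * aw * qu / (1 + r) + σ * c * aq / (1 + r)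
          - σ * c * qu * au / r / (1 + r) ^ 2)
      + (1 / σ) * (((σ * Q0 * (bu - σ * c * au / (1 + r)) + σ * (bq - σ * c * aq / (1 + r))
              + σ * qu * (bu - σ * c * au / (1 + r)) / (1 + r))
            - (bw - σ * c * aw / (1 + r)) * (σ * c * Q0 + σ * qw + σ * c * qu / (1 + r)))
          - (bu - σ * c * au / (1 + r))
            * ((σ * Q0 * uu + σ * qu + σ * qu * uu / (1 + r))
                - c * (σ * c * Q0 + σ * qw + σ * c * qu / (1 + r))) / (r * (1 + r)))
      - (aw - au * c / (r * (1 + r))) / (r * (1 + r))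
          * ((σ * Q0 * uu + σ * qu + σ * qu * uu / (1 + r))
              - c * (σ * c * Q0 + σ * qw + σ * c * qu / (1 + r))) := by
  have hrne : r ≠ 0 := hr.ne'
  have h1r : (1 : ℝ) + r ≠ 0 := by positivity
  have h3' : -(b0 * c) + (bw + c * bu / (1 + r)) = 0 := by
    have hh : σ * (-(b0 * c) + (bw + c * bu / (1 + r))) = 0 := by linear_combination h3
    exact (mul_eq_zero.mp hh).resolve_left hσ
  have hbw : bw = c * b0 - c * bu / (1 + r) := by
    field_simp at h3' ⊢
    linear_combination h3'
  subst hbw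
  have hb0 : b0 = (σ * aw + σ * c * au / (1 + r) + bu - a0 * (σ * c)) / r := by
    field_simp at h2 ⊢
    linear_combination -h2
  subst hb0
  have ha0 : a0 = au / r := by
    field_simp at h1 ⊢
    linarith
  subst ha0
  subst huu
  field_simp
  ring

/-- Minkowski inner product on ℝ⁴ (index 0 timelike). -/
def etaP (X Y : Fin 4 → ℝ) : ℝ := -(X 0 * Y 0) + ∑ i : Fin 3, X i.succ * Y i.succ

set_option maxHeartbeats 4000000 in
/-- Chain rule (Lemma 1 of the paper): for `ψ = ψ(u,s)` restricted to the constraint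
surface as `ψ_*(u,ω)`, and `A,B` satisfying `η(A,U) = 0`, `η(A,S) + η(B,U) = 0`,
`η(B,S) = 0`, one has
`Aᵘ(∂_{uᵘ}ψ)_* + Bᵛ(∂_{sᵛ}ψ)_* = Aⁱ∂_{uⁱ}ψ_*`
`+ (1/σ)(√𝔥)ᵢʲ(Bⁱ − (s⁰/(1+u⁰))Aⁱ)∂̸_{ωʲ}ψ_* − ((√𝔥)ᵢₖAⁱωᵏ/(u⁰(1+u⁰))) uʲ∂̸_{ωʲ}ψ_*`. -/
theorem chain_rule_spin (σ : ℝ) (hσ0 : 0 < σ) (hσ1 : σ ≠ 1)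
    (ψ : (Fin 4 → ℝ) → (Fin 4 → ℝ) → ℝ)
    (hψ : ContDiff ℝ 1 (fun p : (Fin 4 → ℝ) × (Fin 4 → ℝ) => ψ p.1 p.2))
    (u ω : Fin 3 → ℝ) (hω : ∑ i, ω i ^ 2 = 1) (A B : Fin 4 → ℝ) :
    let u0 : ℝ := Real.sqrt (1 + ∑ i, u i ^ 2)
    let s0 : ℝ := σ * ∑ i, ω i * u i
    let s : Fin 3 → ℝ := fun i => σ * (ω i + ((∑ j, ω j * u j) / (1 + u0)) * u i)
    let U : Fin 4 → ℝ := Fin.cons u0 u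
    let S : Fin 4 → ℝ := Fin.cons s0 s
    let sqh : Fin 3 → Fin 3 → ℝ := fun i j =>
      (if i = j then 1 else 0) - u i * u j / (u0 * (1 + u0))
    let ψst : (Fin 3 → ℝ) → (Fin 3 → ℝ) → ℝ := fun w o =>
      ψ (Fin.cons (Real.sqrt (1 + ∑ k, w k ^ 2)) w)
        (Fin.cons (σ * ∑ k, o k * w k) fun i =>
          σ * (o i + ((∑ j, o j * w j) / (1 + Real.sqrt (1 + ∑ k, w k ^ 2))) * w i))
    let Du : Fin 3 → ℝ := fun i => fderiv ℝ (fun w => ψst w ω) u (Pi.single i 1)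
    let Dom : Fin 3 → ℝ := fun j =>
      ∑ l, ((if j = l then (1 : ℝ) else 0) - ω j * ω l) *
        fderiv ℝ (fun o => ψst u o) ω (Pi.single l 1)
    etaP A U = 0 → etaP A S + etaP B U = 0 → etaP B S = 0 →
      (∑ μ, A μ * fderiv ℝ (fun x => ψ x S) U (Pi.single μ 1)) +
          (∑ ν, B ν * fderiv ℝ (fun y => ψ U y) S (Pi.single ν 1)) =
        (∑ i, A i.succ * Du i) +
          (1 / σ) * (∑ i, ∑ j, sqh i j * (B i.succ - (s0 / (1 + u0)) * A i.succ) * Dom j) -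
          ∑ j, ((∑ i, ∑ k, sqh i k * A i.succ * ω k) / (u0 * (1 + u0))) * u j * Dom j := by
  intro u0 s0 s U S sqh ψst Du Dom h1 h2 h3
  have hpos : (0:ℝ) < 1 + ∑ i, u i ^ 2 := by positivity
  have hu0pos : (0:ℝ) < u0 := Real.sqrt_pos.mpr hpos
  have hu0sq : u0 ^ 2 = 1 + ∑ i, u i ^ 2 := Real.sq_sqrt hpos.le
  have hσne : σ ≠ 0 := hσ0.ne'
  have hdψ : Differentiable ℝ (fun p : (Fin 4 → ℝ) × (Fin 4 → ℝ) => ψ p.1 p.2) :=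
    hψ.differentiable one_ne_zero
  set D : ((Fin 4 → ℝ) × (Fin 4 → ℝ)) →L[ℝ] ℝ :=
    fderiv ℝ (fun p : (Fin 4 → ℝ) × (Fin 4 → ℝ) => ψ p.1 p.2) (U, S) with hDdef
  have hP : ∀ μ : Fin 4, fderiv ℝ (fun x => ψ x S) U (Pi.single μ 1)
      = D (Pi.single μ 1, 0) := by
    intro μ
    have hg : HasFDerivAt (fun x : Fin 4 → ℝ => ((x, S) : (Fin 4 → ℝ) × (Fin 4 → ℝ)))
        ((ContinuousLinearMap.id ℝ (Fin 4 → ℝ)).prod 0) U :=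
      (hasFDerivAt_id U).prodMk (hasFDerivAt_const S U)
    have hc : HasFDerivAt (fun x : Fin 4 → ℝ => ψ x S)
        (D.comp ((ContinuousLinearMap.id ℝ (Fin 4 → ℝ)).prod 0)) U :=
      by have := (hdψ (U, S)).hasFDerivAt.comp U hg; exact this
    rw [hc.fderiv]
    rfl
  have hQ : ∀ ν : Fin 4, fderiv ℝ (fun y => ψ U y) S (Pi.single ν 1)
      = D (0, Pi.single ν 1) := by
    intro ν
    have hg : HasFDerivAt (fun y : Fin 4 → ℝ => ((U, y) : (Fin 4 → ℝ) × (Fin 4 → ℝ)))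
        ((0 : (Fin 4 → ℝ) →L[ℝ] (Fin 4 → ℝ)).prod (ContinuousLinearMap.id ℝ (Fin 4 → ℝ))) S :=
      (hasFDerivAt_const U S).prodMk (hasFDerivAt_id S)
    have hc : HasFDerivAt (fun y : Fin 4 → ℝ => ψ U y)
        (D.comp ((0 : (Fin 4 → ℝ) →L[ℝ] (Fin 4 → ℝ)).prod
          (ContinuousLinearMap.id ℝ (Fin 4 → ℝ)))) S :=
      (hdψ (U, S)).hasFDerivAt.comp S hg
    rw [hc.fderiv]
    rfl
  have hDuv : ∀ v : Fin 3 → ℝ, fderiv ℝ (fun w => ψst w ω) u v =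
      (∑ μ, (Fin.cons ((∑ k, u k * v k) / u0) v : Fin 4 → ℝ) μ * D (Pi.single μ 1, 0))
      + (∑ ν, (Fin.cons (σ * ∑ k, ω k * v k) (fun i =>
          σ * ((∑ k, ω k * v k) * u i / (1 + u0)
            + (∑ k, ω k * u k) * v i / (1 + u0)
            - (∑ k, ω k * u k) * ((∑ k, u k * v k) / u0) * u i / (1 + u0) ^ 2))
            : Fin 4 → ℝ) ν * D (0, Pi.single ν 1)) := by
    intro v
    rw [← clm_expand]
    refine fderiv_dir _ _ _ _ ?_ ?_
    · exact (hdψ _).comp u (diff_inner_u σ ω u)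
    · have hcur := curveU σ u ω v
      have hzero : u + (0:ℝ) • v = u := by simp
      have h2 := (hdψ (U, S)).hasFDerivAt.comp_hasDerivAt_of_eq (0:ℝ) hcur (by rw [hzero])
      exact h2
  have hDomv : ∀ w : Fin 3 → ℝ, fderiv ℝ (fun o => ψst u o) ω w =
      (∑ μ, (0 : Fin 4 → ℝ) μ * D (Pi.single μ 1, 0))
      + (∑ ν, (Fin.cons (σ * ∑ k, w k * u k) (fun i =>
          σ * (w i + ((∑ k, w k * u k) / (1 + u0)) * u i)) : Fin 4 → ℝ) ν
            * D (0, Pi.single ν 1)) := by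
    intro w
    rw [← clm_expand]
    refine fderiv_dir _ _ _ _ ?_ ?_
    · exact (hdψ _).comp ω (diff_inner_w σ u ω)
    · have hcur := curveW σ u ω w
      have hzero : ω + (0:ℝ) • w = ω := by simp
      have h2 := (hdψ (U, S)).hasFDerivAt.comp_hasDerivAt_of_eq (0:ℝ) hcur (by rw [hzero])
      exact h2
  have hDu_def : Du = fun i => fderiv ℝ (fun w => ψst w ω) u (Pi.single i 1) := rfl
  have hDom_def : Dom = fun j => ∑ l, ((if j = l then (1:ℝ) else 0) - ω j * ω l) *
      fderiv ℝ (fun o => ψst u o) ω (Pi.single l 1) := rfl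
  have hsqh_def : sqh = fun i j =>
      (if i = j then (1:ℝ) else 0) - u i * u j / (u0 * (1 + u0)) := rfl
  have hs0_def : s0 = σ * ∑ i, ω i * u i := rfl
  have hU_def : U = Fin.cons u0 u := rfl
  have hS_def : S = Fin.cons s0 s := rfl
  have hs_def : s = fun i => σ * (ω i + ((∑ j, ω j * u j) / (1 + u0)) * u i) := rfl
  simp only [hP, hQ]
  unfold etaP at h1 h2 h3
  simp only [hDu_def, hDom_def, hDuv, hDomv, hsqh_def, hs0_def, hs_def, hU_def, hS_def,
    hP, hQ] at h1 h2 h3 ⊢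
  simp [Fin.sum_univ_succ, Fin.sum_univ_three, Fin.cons_zero, Fin.cons_succ, Pi.single_apply,
    Fin.succ_zero_eq_one, Fin.succ_one_eq_two] at h1 h2 h3 ⊢
  have huu3 : u 0 ^ 2 + u 1 ^ 2 + u 2 ^ 2 = u0 ^ 2 - 1 := by
    rw [hu0sq, Fin.sum_univ_three]; ring
  linear_combination key σ u0 (ω 0 * u 0 + ω 1 * u 1 + ω 2 * u 2)
    (u 0 ^ 2 + u 1 ^ 2 + u 2 ^ 2)
    (D (Pi.single 0 1, 0)) (D (0, Pi.single 0 1)) (A 0) (B 0)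
    (A 1 * D (Pi.single 1 1, 0) + A 2 * D (Pi.single 2 1, 0)
      + A 3 * D (Pi.single 3 1, 0))
    (A 1 * D (0, Pi.single 1 1) + A 2 * D (0, Pi.single 2 1)
      + A 3 * D (0, Pi.single 3 1))
    (A 1 * u 0 + A 2 * u 1 + A 3 * u 2)
    (A 1 * ω 0 + A 2 * ω 1 + A 3 * ω 2)
    (B 1 * D (0, Pi.single 1 1) + B 2 * D (0, Pi.single 2 1)
      + B 3 * D (0, Pi.single 3 1))
    (B 1 * u 0 + B 2 * u 1 + B 3 * u 2)
    (B 1 * ω 0 + B 2 * ω 1 + B 3 * ω 2)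
    (u 0 * D (0, Pi.single 1 1) + u 1 * D (0, Pi.single 2 1)
      + u 2 * D (0, Pi.single 3 1))
    (ω 0 * D (0, Pi.single 1 1) + ω 1 * D (0, Pi.single 2 1)
      + ω 2 * D (0, Pi.single 3 1))
    hσne hu0pos huu3
    (by linear_combination h1) (by linear_combination h2) (by linear_combination h3)
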